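/- arXiv:1301.6441 — 2 statements merged into one kernel-verified Lean document; each statement's English description precedes it below -/
import Mathlib

section
/- Let b be a prime and a ≥ 1 an integer. For every z ∈ [0,1), the series Σ_{k=1}^{∞} b^{-(2a+1)⌊log_b k⌋} wal_k(z) converges absolutely and equals (b - 1 - b^{2a⌊log_b z⌋}(b^{2a+1} - 1))/(1 - b^{-2a}), where for z = 0 the term b^{2a⌊log_b 0⌋} is interpreted as 0 (so the sum equals (b-1)/(1-b^{-2a}) at z = 0). -/
open scoped Classical
open Polynomial

noncomputable section

namespace ISPLR

/-- `digit b k i` is the `i`-th base-`b` digit of `k`. -/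
def digit (b k i : ℕ) : ℕ := k / b ^ i % b

/-- `trunc b m k` is the truncated polynomial `tr_m(k) ∈ F_b[x]`. -/
def trunc (b m k : ℕ) : Polynomial (ZMod b) :=
  ∑ i ∈ Finset.range m, Polynomial.C ((digit b k i : ZMod b)) * Polynomial.X ^ i

/-- `mu b k = ⌊log_b k⌋` for `k ≥ 1`. -/
def mu (b k : ℕ) : ℕ := Nat.log b k

/-- `r_{α,d}(k)`. -/
def rfun (b α d k : ℕ) : ℝ :=
  if k = 0 then 1 else (b : ℝ) ^ (-(((2 * min α d + 1) * mu b k : ℕ) : ℤ))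

/-- `blk d u = v(u)`: the set of coordinates `i` whose block `{(i-1)d+1,...,id}` meets `u`. -/
def blk (d : ℕ) (u : Finset ℕ) : Finset ℕ := u.image fun j => (j - 1) / d + 1

/-- The quality criterion `B_{α,d,γ}((q_1,...,q_τ), p)`. -/
def Bcrit (b α d m : ℕ) (γ : Finset ℕ → ℝ) (p : Polynomial (ZMod b))
    (τ : ℕ) (q : ℕ → Polynomial (ZMod b)) : ℝ :=
  ∑ u ∈ (Finset.Icc 1 τ).powerset.filter fun u => u ≠ ∅,
    (4 : ℝ) ^ ((blk d u).card * (d - α)) * γ (blk d u) *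
      ∑' k : ↥u → ℕ,
        (if (∀ j, 1 ≤ k j) ∧ p ∣ ∑ j, trunc b m (k j) * q (j : ℕ)
         then ∏ j, rfun b α d (k j) else 0)

/-- Membership in `R_{b,m}`: nonzero polynomials of degree `< m`. -/
def Rbm (b m : ℕ) (q : Polynomial (ZMod b)) : Prop :=
  q ≠ 0 ∧ q.degree < (m : WithBot ℕ)

/-- `R_{b,m}` as a finset. -/
def Rfin (b m : ℕ) : Finset (Polynomial (ZMod b)) :=
  ((Finset.range (b ^ m)).filter fun n => n ≠ 0).image (trunc b m)

/-- The CBC construction: `q 1 = 1`, every component lies in `R_{b,m}`, and each `q τ`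
minimizes the quality criterion given the previous components. -/
def CBC (b α d m ds : ℕ) (γ : Finset ℕ → ℝ) (p : Polynomial (ZMod b))
    (q : ℕ → Polynomial (ZMod b)) : Prop :=
  q 1 = 1 ∧ (∀ τ, 1 ≤ τ → τ ≤ ds → Rbm b m (q τ)) ∧
    ∀ τ, 2 ≤ τ → τ ≤ ds → ∀ q' : Polynomial (ZMod b), Rbm b m q' →
      Bcrit b α d m γ p τ q ≤ Bcrit b α d m γ p τ (Function.update q τ q')

/-- `C̃_{α,d,λ}`. -/
def Ctilde (b α d : ℕ) (lam : ℝ) : ℝ :=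
  max ((((b : ℝ) - 1) / (1 - (b : ℝ) ^ (-(2 * ((min α d : ℕ) : ℤ))))) ^ lam)
      (((b : ℝ) - 1) / (1 - (b : ℝ) ^ ((1 : ℝ) - (2 * ((min α d : ℕ) : ℝ) + 1) * lam)))

/-- `C_{α,d,λ,a}`. -/
def Cconst (b α d : ℕ) (lam : ℝ) (a : ℕ) : ℝ :=
  (4 : ℝ) ^ (lam * ((d - α : ℕ) : ℝ)) * (-1 + (1 + Ctilde b α d lam) ^ a)

/-- `φ_{α,d}(z)`. -/
def phi (b α d : ℕ) (z : ℝ) : ℝ :=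
  if z = 0 then ((b : ℝ) - 1) / (1 - (b : ℝ) ^ (-(2 * ((min α d : ℕ) : ℤ))))
  else ((b : ℝ) - 1 - (b : ℝ) ^ (2 * ((min α d : ℕ) : ℤ) * ⌊Real.logb b z⌋) *
      ((b : ℝ) ^ (2 * min α d + 1) - 1)) /
    (1 - (b : ℝ) ^ (-(2 * ((min α d : ℕ) : ℤ))))

/-- The `l`-th coefficient `t_l` of the Laurent expansion `g/p = Σ_{l} t_l x^{-l}`
(for `l ≥ 1`; the coefficients with `l ≥ 1` only depend on `g % p`, and are obtained
as power-series coefficients after the substitution `y = x^{-1}`). -/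
def lcoeff (b : ℕ) [Fact (Nat.Prime b)] (m : ℕ) (p g : Polynomial (ZMod b)) (l : ℕ) : ZMod b :=
  PowerSeries.coeff l
    (PowerSeries.X * (((g % p).reflect (m - 1) : Polynomial (ZMod b)) : PowerSeries (ZMod b)) *
      (((p.reflect m : Polynomial (ZMod b)) : PowerSeries (ZMod b)))⁻¹)

/-- `v_m(g/p) = Σ_{l=1}^m t_l b^{-l}`. -/
def vmap (b : ℕ) [Fact (Nat.Prime b)] (m : ℕ) (p g : Polynomial (ZMod b)) : ℝ :=
  ∑ l ∈ Finset.Icc 1 m, ((lcoeff b m p g l).val : ℝ) / (b : ℝ) ^ l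

/-- The `j`-th coordinate `z_{n,j} = v_m(n(x) q_j(x)/p(x))` of the `n`-th point of the
polynomial lattice point set with modulus `p` and generating polynomial `qj`. -/
def plp (b : ℕ) [Fact (Nat.Prime b)] (m : ℕ) (p qj : Polynomial (ZMod b)) (n : ℕ) : ℝ :=
  vmap b m p (trunc b m n * qj)

/-- The `i`-th base-`b` digit (for `i ≥ 1`) of a real number `x ∈ [0,1)`, taken from the
expansion in which infinitely many digits differ from `b - 1`. -/
def rdigit (b : ℕ) (x : ℝ) (i : ℕ) : ℕ := (⌊x * (b : ℝ) ^ i⌋.toNat) % b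

/-- The `k`-th base-`b` Walsh function. -/
def walsh (b k : ℕ) (x : ℝ) : ℂ :=
  Complex.exp (2 * (Real.pi : ℂ) * Complex.I *
    (((∑ a ∈ Finset.range (Nat.log b k + 1), rdigit b x (a + 1) * digit b k a : ℕ)) : ℂ) / (b : ℂ))

/-- `θ(q̃)`: the part of the quality criterion involving the new component `q̃` at index `τ+1`. -/
def theta (b α d m τ : ℕ) (γ : Finset ℕ → ℝ) (p : Polynomial (ZMod b))
    (q : ℕ → Polynomial (ZMod b)) (qt : Polynomial (ZMod b)) : ℝ :=
  ∑ u ∈ (Finset.Icc 1 τ).powerset,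
    (4 : ℝ) ^ ((blk d (insert (τ + 1) u)).card * (d - α)) * γ (blk d (insert (τ + 1) u)) *
      ∑' kk : (↥u → ℕ) × ℕ,
        (if (∀ j, 1 ≤ kk.1 j) ∧ 1 ≤ kk.2 ∧
            p ∣ ((∑ j, trunc b m (kk.1 j) * q (j : ℕ)) + trunc b m kk.2 * qt)
         then (∏ j, rfun b α d (kk.1 j)) * rfun b α d kk.2 else 0)

lemma walsh_abs (b k : ℕ) (x : ℝ) : ‖walsh b k x‖ = 1 := by
  unfold walsh
  set n : ℕ := ∑ a ∈ Finset.range (Nat.log b k + 1), rdigit b x (a + 1) * digit b k a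
  rw [show (2 * (Real.pi : ℂ) * Complex.I * (n:ℂ) / ((b:ℕ):ℂ)) =
        ((2 * Real.pi * n / b : ℝ) : ℂ) * Complex.I by push_cast; ring]
  exact Complex.norm_exp_ofReal_mul_I _

lemma digit_eq_zero {b k i : ℕ} (h : k < b ^ i) : digit b k i = 0 := by
  simp [digit, Nat.div_eq_of_lt h]

lemma rdigit_lt {b : ℕ} (hb : 0 < b) (x : ℝ) (i : ℕ) : rdigit b x i < b := Nat.mod_lt _ hb

lemma geom_sum_exp {b : ℕ} (hb : 1 < b) {x : ℕ} (hx : x < b) :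
    ∑ j ∈ Finset.range b, Complex.exp (2 * (Real.pi:ℂ) * Complex.I * ((x * j : ℕ):ℂ) / (b:ℂ))
      = if x = 0 then (b:ℂ) else 0 := by
  have hb0 : (b:ℂ) ≠ 0 := Nat.cast_ne_zero.2 (by omega)
  split_ifs with h
  · subst h; simp
  · set r : ℂ := Complex.exp (2 * (Real.pi:ℂ) * Complex.I * (x:ℂ) / (b:ℂ)) with hr
    have hterm : ∀ j ∈ Finset.range b,
        Complex.exp (2 * (Real.pi:ℂ) * Complex.I * ((x * j : ℕ):ℂ) / (b:ℂ)) = r ^ j := by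
      intro j _
      rw [hr, ← Complex.exp_nat_mul]
      congr 1; push_cast; ring
    rw [Finset.sum_congr rfl hterm]
    have hr1 : r ≠ 1 := by
      intro hcon
      rw [hr, Complex.exp_eq_one_iff] at hcon
      obtain ⟨n, hn⟩ := hcon
      have hpi : (2 * (Real.pi:ℂ) * Complex.I) ≠ 0 := by
        simp [Real.pi_ne_zero, Complex.I_ne_zero]
      have hx' : (x:ℂ) = n * b := by
        field_simp at hn
        have h2 : (2 * (Real.pi:ℂ) * Complex.I) * (x:ℂ)
            = (2 * (Real.pi:ℂ) * Complex.I) * ((n:ℂ) * b) := by linear_combination (2 * (Real.pi:ℂ) * Complex.I) * hn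
        exact mul_left_cancel₀ hpi h2
      have : (x:ℤ) = n * b := by exact_mod_cast hx'
      have hdvd : (b:ℤ) ∣ (x:ℤ) := ⟨n, by linarith⟩
      have : b ∣ x := Int.ofNat_dvd.mp hdvd
      rcases this with ⟨c, rfl⟩
      rcases Nat.eq_zero_or_pos c with rfl | hc
      · simp at h
      · nlinarith [hx, hc]
    have hrb : r ^ b = 1 := by
      rw [hr, ← Complex.exp_nat_mul]
      rw [Complex.exp_eq_one_iff]
      exact ⟨x, by rw [mul_comm, div_mul_cancel₀ _ hb0]; push_cast; ring⟩
    rw [geom_sum_eq hr1, hrb]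
    simp

lemma digit_eq_zero_of_log_lt {b k i : ℕ} (hb : 1 < b) (h : Nat.log b k < i) :
    digit b k i = 0 := by
  rcases Nat.eq_zero_or_pos k with rfl | hk
  · simp [digit]
  · exact digit_eq_zero ((Nat.log_lt_iff_lt_pow hb (by omega)).1 h)

lemma walsh_prod {b m k : ℕ} (hb : 1 < b) (hk : k < b ^ m) (z : ℝ) :
    walsh b k z = ∏ i ∈ Finset.range m,
      Complex.exp (2 * (Real.pi:ℂ) * Complex.I * ((rdigit b z (i+1) * digit b k i : ℕ):ℂ) / (b:ℂ)) := by
  have key : ∀ M, Nat.log b k < M →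
      ∑ a ∈ Finset.range M, rdigit b z (a + 1) * digit b k a
        = ∑ a ∈ Finset.range (Nat.log b k + 1), rdigit b z (a + 1) * digit b k a := by
    intro M hM
    refine (Finset.sum_subset (Finset.range_subset_range.2 (by omega)) ?_).symm
    intro i _ hi
    simp only [Finset.mem_range, not_lt] at hi
    rw [digit_eq_zero_of_log_lt hb (by omega), mul_zero]
  have hsum : ∑ a ∈ Finset.range m, rdigit b z (a + 1) * digit b k a
      = ∑ a ∈ Finset.range (Nat.log b k + 1), rdigit b z (a + 1) * digit b k a := by
    set M := max m (Nat.log b k + 1) with hM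
    have h1 := key M (by omega)
    have h2 : ∑ a ∈ Finset.range M, rdigit b z (a + 1) * digit b k a
        = ∑ a ∈ Finset.range m, rdigit b z (a + 1) * digit b k a := by
      refine (Finset.sum_subset (Finset.range_subset_range.2 (by omega)) ?_).symm
      intro i _ hi
      simp only [Finset.mem_range, not_lt] at hi
      rw [digit_eq_zero (lt_of_lt_of_le hk (Nat.pow_le_pow_right (by omega) hi)), mul_zero]
    rw [← h2, h1]
  unfold walsh
  rw [← hsum, ← Complex.exp_sum]
  congr 1
  rw [Nat.cast_sum, Finset.mul_sum, Finset.sum_div]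

lemma walsh_sum {b : ℕ} (hb : 1 < b) (m : ℕ) (z : ℝ) :
    ∑ k ∈ Finset.range (b ^ m), walsh b k z
      = if ∀ i ∈ Finset.range m, rdigit b z (i+1) = 0 then ((b:ℂ))^m else 0 := by
  have hb0 : 0 < b := by omega
  rw [← Fin.sum_univ_eq_sum_range (fun k => walsh b k z) (b^m)]
  rw [← Equiv.sum_comp (finFunctionFinEquiv (m := b) (n := m))
    (fun k : Fin (b^m) => walsh b (k:ℕ) z)]
  have hdig : ∀ (f : Fin m → Fin b) (i : Fin m),
      digit b ((finFunctionFinEquiv f : Fin (b^m)) : ℕ) (i : ℕ) = (f i : ℕ) := by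
    intro f i
    have := finFunctionFinEquiv_symm_apply_val (finFunctionFinEquiv f) i
    rw [Equiv.symm_apply_apply] at this
    exact this.symm
  have hw : ∀ f : Fin m → Fin b,
      walsh b ((finFunctionFinEquiv f : Fin (b^m)) : ℕ) z
        = ∏ i : Fin m, Complex.exp (2 * (Real.pi:ℂ) * Complex.I *
            ((rdigit b z ((i:ℕ)+1) * (f i : ℕ) : ℕ):ℂ) / (b:ℂ)) := by
    intro f
    rw [walsh_prod hb (Fin.is_lt _) z, ← Fin.prod_univ_eq_prod_range]
    exact Finset.prod_congr rfl fun i _ => by rw [hdig f i]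
  rw [Finset.sum_congr rfl (fun f _ => hw f), ← Fintype.piFinset_univ]
  have hps := Finset.prod_univ_sum (fun _ : Fin m => (Finset.univ : Finset (Fin b)))
    (fun (i : Fin m) (j : Fin b) => Complex.exp (2 * (Real.pi:ℂ) * Complex.I *
      ((rdigit b z ((i:ℕ)+1) * (j : ℕ) : ℕ):ℂ) / (b:ℂ)))
  rw [← hps]
  have hfac : ∀ i : Fin m,
      (∑ j : Fin b, Complex.exp (2 * (Real.pi:ℂ) * Complex.I *
          ((rdigit b z ((i:ℕ)+1) * (j : ℕ) : ℕ):ℂ) / (b:ℂ)))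
        = if rdigit b z ((i:ℕ)+1) = 0 then (b:ℂ) else 0 := by
    intro i
    rw [← geom_sum_exp hb (rdigit_lt hb0 z ((i:ℕ)+1))]
    exact Fin.sum_univ_eq_sum_range (fun j : ℕ => Complex.exp (2 * (Real.pi:ℂ) * Complex.I *
      ((rdigit b z ((i:ℕ)+1) * j : ℕ):ℂ) / (b:ℂ))) b
  rw [Finset.prod_congr rfl (fun i _ => hfac i)]
  by_cases hall : ∀ i ∈ Finset.range m, rdigit b z (i+1) = 0
  · rw [if_pos hall]
    rw [Finset.prod_congr rfl (fun (i : Fin m) _ => if_pos (hall i (Finset.mem_range.2 i.is_lt)))]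
    simp
  · rw [if_neg hall]
    push_neg at hall
    obtain ⟨i, hi, hne⟩ := hall
    rw [Finset.mem_range] at hi
    exact Finset.prod_eq_zero (Finset.mem_univ (⟨i, hi⟩ : Fin m)) (if_neg hne)

lemma rdigit_eq {b : ℕ} (z : ℝ) (i : ℕ) : rdigit b z i = ⌊z * (b:ℝ)^i⌋₊ % b := by
  rw [rdigit, Int.floor_toNat]

lemma rdigit_zero_iff {b : ℕ} (hb : 1 < b) {z : ℝ} (hz0 : 0 ≤ z) (hz1 : z < 1) (m : ℕ) :
    (∀ i ∈ Finset.range m, rdigit b z (i+1) = 0) ↔ ⌊z * (b:ℝ)^m⌋₊ = 0 := by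
  induction m with
  | zero =>
    simp only [Finset.range_zero, Finset.notMem_empty, false_implies, implies_true, true_iff,
      pow_zero, mul_one]
    rw [Nat.floor_eq_zero]; exact hz1
  | succ m ih =>
    have hbN : 0 < b := by omega
    have hbR : (0:ℝ) < b := by exact_mod_cast hbN
    have hMN : ⌊z * (b:ℝ)^m⌋₊ = ⌊z * (b:ℝ)^(m+1)⌋₊ / b := by
      rw [show z * (b:ℝ)^m = (z * (b:ℝ)^(m+1)) / (b:ℕ) by
        push_cast; field_simp; ring]
      exact Nat.floor_div_natCast (z * (b:ℝ)^(m+1)) b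
    have hrd : rdigit b z (m+1) = ⌊z * (b:ℝ)^(m+1)⌋₊ % b := rdigit_eq z (m+1)
    constructor
    · intro h
      have h1 : ⌊z * (b:ℝ)^m⌋₊ = 0 := ih.1 fun i hi => h i (Finset.mem_range.2 (by
        have := Finset.mem_range.1 hi; omega))
      have h2 : rdigit b z (m+1) = 0 := h m (Finset.mem_range.2 (by omega))
      rw [hrd] at h2; rw [hMN] at h1
      show ⌊z * (b:ℝ)^(m+1)⌋₊ = 0
      calc ⌊z * (b:ℝ)^(m+1)⌋₊ = b * (⌊z * (b:ℝ)^(m+1)⌋₊ / b) + ⌊z * (b:ℝ)^(m+1)⌋₊ % b :=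
            (Nat.div_add_mod _ b).symm
        _ = 0 := by rw [h1, h2]; simp
    · intro h i hi
      rw [Finset.mem_range] at hi
      rcases Nat.lt_succ_iff_lt_or_eq.1 hi with hi' | rfl
      · exact ih.2 (by rw [hMN, h]; simp) i (Finset.mem_range.2 hi')
      · rw [hrd, h]; simp

lemma walsh_sum' {b : ℕ} (hb : 1 < b) {z : ℝ} (hz0 : 0 ≤ z) (hz1 : z < 1) (m : ℕ) :
    ∑ k ∈ Finset.range (b ^ m), walsh b k z
      = if ⌊z * (b:ℝ)^m⌋₊ = 0 then ((b:ℂ))^m else 0 := by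
  rw [walsh_sum hb m z]
  simp only [rdigit_zero_iff hb hz0 hz1 m]

lemma partial_sum (b a : ℕ) (hb : 1 < b) {z : ℝ} (hz0 : 0 ≤ z) (hz1 : z < 1) (N : ℕ) :
    ∑ k ∈ Finset.range (b ^ N),
        (if k = 0 then 0 else
          (((b : ℝ) ^ (-(((2 * a + 1) * Nat.log b k : ℕ) : ℤ)) : ℝ) : ℂ) * walsh b k z)
      = ∑ μ ∈ Finset.range N,
          (((b : ℝ) ^ (-(((2 * a + 1) * μ : ℕ) : ℤ)) : ℝ) : ℂ) *
            ((if ⌊z * (b:ℝ)^(μ+1)⌋₊ = 0 then ((b:ℂ))^(μ+1) else 0)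
              - (if ⌊z * (b:ℝ)^μ⌋₊ = 0 then ((b:ℂ))^μ else 0)) := by
  induction N with
  | zero => simp
  | succ N ih =>
    rw [Finset.sum_range_succ, ← ih]
    have hle : b^N ≤ b^(N+1) := Nat.pow_le_pow_right (by omega) (by omega)
    rw [Finset.range_eq_Ico, ← Finset.sum_Ico_consecutive _ (Nat.zero_le (b^N)) hle,
      ← Finset.range_eq_Ico]
    congr 1
    have hterm : ∀ k ∈ Finset.Ico (b^N) (b^(N+1)),
        (if k = 0 then 0 else
          (((b : ℝ) ^ (-(((2 * a + 1) * Nat.log b k : ℕ) : ℤ)) : ℝ) : ℂ) * walsh b k z)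
        = (((b : ℝ) ^ (-(((2 * a + 1) * N : ℕ) : ℤ)) : ℝ) : ℂ) * walsh b k z := by
      intro k hk
      rw [Finset.mem_Ico] at hk
      have hk0 : k ≠ 0 := by
        have : 0 < b^N := Nat.pow_pos (by omega)
        omega
      rw [if_neg hk0, Nat.log_eq_of_pow_le_of_lt_pow hk.1 hk.2]
    rw [Finset.sum_congr rfl hterm, ← Finset.mul_sum,
      Finset.sum_Ico_eq_sub _ hle, walsh_sum' hb hz0 hz1, walsh_sum' hb hz0 hz1]

lemma hasSum_c (b a : ℕ) (hb : 1 < b) (ha : 1 ≤ a) {z : ℝ} (hz0 : 0 ≤ z) (hz1 : z < 1) :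
    HasSum (fun μ : ℕ => (((b : ℝ) ^ (-(((2 * a + 1) * μ : ℕ) : ℤ)) : ℝ) : ℂ) *
        ((if ⌊z * (b:ℝ)^(μ+1)⌋₊ = 0 then ((b:ℂ))^(μ+1) else 0)
          - (if ⌊z * (b:ℝ)^μ⌋₊ = 0 then ((b:ℂ))^μ else 0)))
      ((phi b a a z : ℝ) : ℂ) := by
  have hbR : (1:ℝ) < b := by exact_mod_cast hb
  have hbR0 : (0:ℝ) < b := by linarith
  set B : ℂ := (b : ℂ) with hBdef
  have hB0 : B ≠ 0 := by
    simp only [hBdef, ne_eq, Nat.cast_eq_zero]; omega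
  set r : ℂ := B ^ (-(2 * (a:ℤ))) with hrdef
  have hcoeff : ∀ μ : ℕ, (((b : ℝ) ^ (-(((2 * a + 1) * μ : ℕ) : ℤ)) : ℝ) : ℂ)
      = B ^ (-(((2 * a + 1) * μ : ℕ) : ℤ)) := by
    intro μ
    rw [Complex.ofReal_zpow, Complex.ofReal_natCast]
  have hkey : ∀ μ : ℕ, B ^ (-(((2 * a + 1) * μ : ℕ) : ℤ)) * B ^ μ = r ^ μ := by
    intro μ
    rw [hrdef, ← zpow_natCast B μ, ← zpow_add₀ hB0, ← zpow_natCast (B ^ (-(2 * (a:ℤ)))) μ,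
      ← zpow_mul]
    congr 1
    push_cast
    ring
  have hterm : ∀ μ : ℕ, B ^ (-(((2 * a + 1) * μ : ℕ) : ℤ)) * (B ^ (μ+1) - B ^ μ)
      = (B - 1) * r ^ μ := by
    intro μ
    rw [pow_succ]
    calc B ^ (-(((2 * a + 1) * μ : ℕ) : ℤ)) * (B ^ μ * B - B ^ μ)
        = (B ^ (-(((2 * a + 1) * μ : ℕ) : ℤ)) * B ^ μ) * (B - 1) := by ring
      _ = (B - 1) * r ^ μ := by rw [hkey μ]; ring
  have hrnorm : ‖r‖ < 1 := by
    rw [hrdef, norm_zpow]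
    have hnb : ‖B‖ = (b:ℝ) := by rw [hBdef, Complex.norm_natCast]
    rw [hnb]
    exact zpow_lt_one_of_neg₀ hbR (by omega)
  have hr1 : r ≠ 1 := by
    intro hcon; rw [hcon] at hrnorm; simp at hrnorm
  have hr0 : r ≠ 0 := zpow_ne_zero _ hB0
  have hBr : B ^ (2 * a + 1) * r = B := by
    rw [hrdef, ← zpow_natCast B (2 * a + 1), ← zpow_add₀ hB0]
    rw [show ((2 * a + 1 : ℕ) : ℤ) + -(2 * (a:ℤ)) = 1 by push_cast; ring, zpow_one]
  have hphi_den : ((1 : ℝ) - (b : ℝ) ^ (-(2 * ((a : ℕ) : ℤ))) : ℝ) ≠ 0 := by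
    have : (b:ℝ) ^ (-(2 * ((a : ℕ) : ℤ))) < 1 := zpow_lt_one_of_neg₀ hbR (by omega)
    linarith
  have hcast_den : ((1 - (b : ℝ) ^ (-(2 * ((a : ℕ) : ℤ))) : ℝ) : ℂ) = 1 - r := by
    push_cast [Complex.ofReal_zpow]
    rw [hrdef, hBdef]
  by_cases hz : z = 0
  · subst hz
    have hcondall : ∀ m : ℕ, ⌊(0:ℝ) * (b:ℝ)^m⌋₊ = 0 := by
      intro m; simp
    have heq : (fun μ : ℕ => (((b : ℝ) ^ (-(((2 * a + 1) * μ : ℕ) : ℤ)) : ℝ) : ℂ) *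
        ((if ⌊(0:ℝ) * (b:ℝ)^(μ+1)⌋₊ = 0 then ((b:ℂ))^(μ+1) else 0)
          - (if ⌊(0:ℝ) * (b:ℝ)^μ⌋₊ = 0 then ((b:ℂ))^μ else 0)))
        = fun μ : ℕ => (B - 1) * r ^ μ := by
      funext μ
      rw [if_pos (hcondall (μ+1)), if_pos (hcondall μ), hcoeff μ, hterm μ]
    rw [heq]
    have hgeom := (hasSum_geometric_of_norm_lt_one hrnorm).mul_left (B - 1)
    convert hgeom using 1
    rfl; rw [phi, if_pos rfl]
    simp only [min_self]
    rw [Complex.ofReal_div, hcast_den]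
    push_cast
    rw [div_eq_mul_inv]
  · have hzpos : 0 < z := lt_of_le_of_ne hz0 (Ne.symm hz)
    set t : ℤ := ⌊Real.logb b z⌋ with htdef
    have hbne1 : (b:ℝ) ≠ 1 := by linarith
    have hlow : (b:ℝ) ^ t ≤ z := by
      have h1 : (b:ℝ) ^ ((t:ℤ):ℝ) ≤ (b:ℝ) ^ (Real.logb b z) := by
        refine (Real.rpow_le_rpow_left_iff hbR).2 ?_
        exact_mod_cast Int.floor_le _
      rw [Real.rpow_logb hbR0 hbne1 hzpos] at h1
      rwa [Real.rpow_intCast] at h1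
    have hhigh : z < (b:ℝ) ^ (t + 1) := by
      have h1 : (b:ℝ) ^ (Real.logb b z) < (b:ℝ) ^ (((t+1:ℤ)):ℝ) := by
        refine (Real.rpow_lt_rpow_left_iff hbR).2 ?_
        have h2 := Int.lt_floor_add_one (Real.logb b z)
        push_cast
        push_cast at h2
        linarith
      rw [Real.rpow_logb hbR0 hbne1 hzpos, Real.rpow_intCast] at h1
      exact h1
    have htneg : t ≤ -1 := by
      have hl : Real.logb b z < 0 := Real.logb_neg hbR hzpos hz1
      have h2 : t < 0 := Int.floor_lt.2 (by exact_mod_cast hl)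
      omega
    set L : ℕ := (-t-1).toNat with hLdef
    have hLt : (L:ℤ) = -t - 1 := Int.toNat_of_nonneg (by omega)
    have hbpos' : (0:ℝ) < (b:ℝ) := hbR0
    have hcond : ∀ m : ℕ, (⌊z * (b:ℝ)^m⌋₊ = 0 ↔ m ≤ L) := by
      intro m
      rw [Nat.floor_eq_zero]
      constructor
      · intro h
        have h2 : (b:ℝ) ^ (t + (m:ℤ)) < (b:ℝ) ^ (0:ℤ) := by
          rw [zpow_add₀ (ne_of_gt hbpos') t (m:ℤ), zpow_zero]
          calc (b:ℝ)^t * (b:ℝ)^(m:ℤ) ≤ z * (b:ℝ)^(m:ℤ) :=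
                mul_le_mul_of_nonneg_right hlow (by positivity)
            _ = z * (b:ℝ)^m := by rw [zpow_natCast]
            _ < 1 := h
        have h3 : t + (m:ℤ) < 0 := by
          by_contra hcon
          push_neg at hcon
          exact absurd h2 (not_lt.2 (zpow_le_zpow_right₀ (le_of_lt hbR) (by omega)))
        omega
      · intro h
        have hmle : (t:ℤ) + 1 ≤ -(m:ℤ) := by omega
        have h1 : z < (b:ℝ) ^ (-(m:ℤ)) :=
          lt_of_lt_of_le hhigh (zpow_le_zpow_right₀ (le_of_lt hbR) hmle)
        calc z * (b:ℝ)^m < (b:ℝ)^(-(m:ℤ)) * (b:ℝ)^m :=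
              mul_lt_mul_of_pos_right h1 (by positivity)
          _ = 1 := by
              rw [← zpow_natCast (b:ℝ) m, ← zpow_add₀ (ne_of_gt hbpos')]
              simp
    have hzero : ∀ μ ∉ Finset.range (L+1),
        (((b : ℝ) ^ (-(((2 * a + 1) * μ : ℕ) : ℤ)) : ℝ) : ℂ) *
        ((if ⌊z * (b:ℝ)^(μ+1)⌋₊ = 0 then ((b:ℂ))^(μ+1) else 0)
          - (if ⌊z * (b:ℝ)^μ⌋₊ = 0 then ((b:ℂ))^μ else 0)) = 0 := by
      intro μ hμ
      rw [Finset.mem_range] at hμ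
      rw [if_neg (by rw [hcond]; omega), if_neg (by rw [hcond]; omega)]
      ring
    have hsum := hasSum_sum_of_ne_finset_zero (L := SummationFilter.unconditional ℕ) hzero
    have hval : ∑ μ ∈ Finset.range (L+1),
        ((((b : ℝ) ^ (-(((2 * a + 1) * μ : ℕ) : ℤ)) : ℝ) : ℂ) *
        ((if ⌊z * (b:ℝ)^(μ+1)⌋₊ = 0 then ((b:ℂ))^(μ+1) else 0)
          - (if ⌊z * (b:ℝ)^μ⌋₊ = 0 then ((b:ℂ))^μ else 0)))
        = ((phi b a a z : ℝ) : ℂ) := by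
      rw [Finset.sum_range_succ]
      have hmid : ∀ μ ∈ Finset.range L,
          ((((b : ℝ) ^ (-(((2 * a + 1) * μ : ℕ) : ℤ)) : ℝ) : ℂ) *
          ((if ⌊z * (b:ℝ)^(μ+1)⌋₊ = 0 then ((b:ℂ))^(μ+1) else 0)
            - (if ⌊z * (b:ℝ)^μ⌋₊ = 0 then ((b:ℂ))^μ else 0)))
          = (B - 1) * r ^ μ := by
        intro μ hμ
        rw [Finset.mem_range] at hμ
        rw [if_pos ((hcond (μ+1)).2 (by omega)), if_pos ((hcond μ).2 (by omega)),
          hcoeff μ, hterm μ]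
      have hlast : ((((b : ℝ) ^ (-(((2 * a + 1) * L : ℕ) : ℤ)) : ℝ) : ℂ) *
          ((if ⌊z * (b:ℝ)^(L+1)⌋₊ = 0 then ((b:ℂ))^(L+1) else 0)
            - (if ⌊z * (b:ℝ)^L⌋₊ = 0 then ((b:ℂ))^L else 0)))
          = -(r ^ L) := by
        rw [if_neg (by rw [hcond]; omega), if_pos ((hcond L).2 le_rfl), hcoeff L]
        have := hkey L
        calc B ^ (-(((2 * a + 1) * L : ℕ) : ℤ)) * (0 - B ^ L)
            = -(B ^ (-(((2 * a + 1) * L : ℕ) : ℤ)) * B ^ L) := by ring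
          _ = -(r ^ L) := by rw [hkey L]
      rw [Finset.sum_congr rfl hmid, hlast, ← Finset.mul_sum, geom_sum_eq hr1]
      -- phi side
      rw [phi, if_neg hz]
      simp only [min_self]
      have hBt : (((b:ℝ) ^ (2 * ((a:ℕ):ℤ) * t) : ℝ) : ℂ) = r ^ L * r := by
        rw [Complex.ofReal_zpow, Complex.ofReal_natCast, ← hBdef]
        rw [show 2 * ((a:ℕ):ℤ) * t = (-(2 * (a:ℤ))) * ((L:ℤ) + 1) by
          rw [show ((L:ℤ)) = -t - 1 from hLt]; ring]
        rw [zpow_mul, ← hrdef, show ((L:ℤ) + 1) = ((L + 1 : ℕ) : ℤ) by push_cast; ring,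
          zpow_natCast, pow_succ]
      have hB2a1 : ((((b:ℝ)) ^ (2 * a + 1) : ℝ) : ℂ) = B ^ (2 * a + 1) := by
        rw [hBdef]; push_cast; ring
      rw [Complex.ofReal_div, Complex.ofReal_sub, Complex.ofReal_sub, Complex.ofReal_mul,
        hcast_den, hBt, Complex.ofReal_sub, hB2a1, Complex.ofReal_one]
      have hBrq : B ^ (2 * a + 1) = B / r := by
        rw [eq_div_iff hr0]; exact hBr
      rw [hBrq]
      have h1r : (1:ℂ) - r ≠ 0 := by
        intro hcon
        apply hr1
        linear_combination -hcon
      have hrm1 : r - 1 ≠ 0 := by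
        intro hcon
        apply hr1
        linear_combination hcon
      field_simp
      rw [Complex.ofReal_natCast, ← hBdef]
      ring
    exact hval ▸ hsum

lemma summable_abs (b a : ℕ) (hb : 1 < b) (ha : 1 ≤ a) (z : ℝ) :
    Summable (fun k : ℕ => ‖
      (if k = 0 then 0 else
        (((b : ℝ) ^ (-(((2 * a + 1) * Nat.log b k : ℕ) : ℤ)) : ℝ) : ℂ) * walsh b k z)‖) := by
  have hbR : (1:ℝ) < b := by exact_mod_cast hb
  have hg : Summable (fun k : ℕ => (b:ℝ)^2 * (1 / (k:ℝ)^2)) :=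
    (Real.summable_one_div_nat_pow.mpr one_lt_two).mul_left _
  refine Summable.of_nonneg_of_le (fun k => norm_nonneg _) ?_ hg
  intro k
  rcases Nat.eq_zero_or_pos k with rfl | hk
  · simp
  · rw [if_neg (by omega)]
    rw [norm_mul, walsh_abs, mul_one, Complex.norm_real, Real.norm_eq_abs,
      abs_of_nonneg (zpow_nonneg (by positivity) _)]
    set M : ℕ := (2 * a + 1) * Nat.log b k with hM
    have hnat : k ^ 2 ≤ b ^ (M + 2) := by
      have h1 : k < b ^ (Nat.log b k + 1) := Nat.lt_pow_succ_log_self hb k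
      have h2 : k ^ 2 < (b ^ (Nat.log b k + 1)) ^ 2 := by
        exact Nat.pow_lt_pow_left h1 (by omega)
      have h3 : (b ^ (Nat.log b k + 1)) ^ 2 = b ^ (2 * Nat.log b k + 2) := by
        rw [← pow_mul]; ring_nf
      have h4 : 2 * Nat.log b k + 2 ≤ M + 2 := by
        rw [hM]
        have : 2 * Nat.log b k ≤ (2 * a + 1) * Nat.log b k :=
          Nat.mul_le_mul_right _ (by omega)
        omega
      have h5 : b ^ (2 * Nat.log b k + 2) ≤ b ^ (M + 2) := Nat.pow_le_pow_right (by omega) h4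
      omega
    have hreal : ((k:ℝ)) ^ 2 ≤ (b:ℝ) ^ (M + 2) := by exact_mod_cast hnat
    have hk0 : (0:ℝ) < (k:ℝ)^2 := by positivity
    have hbM : (0:ℝ) < (b:ℝ)^M := by positivity
    rw [zpow_neg, zpow_natCast]
    rw [inv_eq_one_div, mul_one_div, div_le_div_iff₀ hbM hk0]
    calc (1:ℝ) * (k:ℝ)^2 = (k:ℝ)^2 := by ring
      _ ≤ (b:ℝ)^(M+2) := hreal
      _ = (b:ℝ)^2 * (b:ℝ)^M := by rw [pow_add]; ring

theorem statement6 (b : ℕ) (hb : Nat.Prime b) (a : ℕ) (ha : 1 ≤ a)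
    (z : ℝ) (hz0 : 0 ≤ z) (hz1 : z < 1) :
    Summable (fun k : ℕ => ‖
      (if k = 0 then 0 else
        (((b : ℝ) ^ (-(((2 * a + 1) * Nat.log b k : ℕ) : ℤ)) : ℝ) : ℂ) * walsh b k z)‖) ∧
    HasSum (fun k : ℕ =>
      if k = 0 then 0 else
        (((b : ℝ) ^ (-(((2 * a + 1) * Nat.log b k : ℕ) : ℤ)) : ℝ) : ℂ) * walsh b k z)
      ((phi b a a z : ℝ) : ℂ) := by
  have hb1 : 1 < b := hb.one_lt
  refine ⟨summable_abs b a hb1 ha z, ?_⟩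
  set f : ℕ → ℂ := fun k => if k = 0 then 0 else
      (((b : ℝ) ^ (-(((2 * a + 1) * Nat.log b k : ℕ) : ℤ)) : ℝ) : ℂ) * walsh b k z with hf
  have hs : Summable f := by
    apply Summable.of_norm
    exact summable_abs b a hb1 ha z
  have h1 := hs.hasSum.tendsto_sum_nat
  have h3 := h1.comp (tendsto_pow_atTop_atTop_of_one_lt hb1)
  have h4 : ((fun n => ∑ k ∈ Finset.range n, f k) ∘ fun N => b ^ N)
      = fun N => ∑ μ ∈ Finset.range N,
          (((b : ℝ) ^ (-(((2 * a + 1) * μ : ℕ) : ℤ)) : ℝ) : ℂ) *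
            ((if ⌊z * (b:ℝ)^(μ+1)⌋₊ = 0 then ((b:ℂ))^(μ+1) else 0)
              - (if ⌊z * (b:ℝ)^μ⌋₊ = 0 then ((b:ℂ))^μ else 0)) := by
    funext N
    exact partial_sum b a hb1 hz0 hz1 N
  rw [h4] at h3
  have h5 := (hasSum_c b a hb1 ha hz0 hz1).tendsto_sum_nat
  have hval := tendsto_nhds_unique h3 h5
  rw [← hval]
  exact hs.hasSum


end ISPLR
end
end

section
/- Let b be a prime, m, d ∈ ℕ, α ≥ 1 an integer, p ∈ F_b[x] irreducible with deg(p) = m, and γ = (γ_w) nonnegative weights. For the single-component generating vector q_1 = 1 (the constant polynomial 1), one has exactly B_{α,d,γ}((1), p) = 4^{max(d-α,0)} γ_{{1}} (b-1) / (b^{(2min(α,d)+1)m} (1 - b^{-2min(α,d)})). -/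
open scoped Classical
open Polynomial

noncomputable section

namespace ISPLR

private lemma aux_pow_dvd_iff {b : ℕ} (hb : 1 < b) (m k : ℕ) :
    b ^ m ∣ k ↔ ∀ i < m, digit b k i = 0 := by
  induction m with
  | zero => simp
  | succ m ih =>
    constructor
    · intro h i hi
      obtain ⟨t, rfl⟩ := (pow_dvd_pow b (show i + 1 ≤ m + 1 by omega)).trans h
      unfold digit
      rw [pow_succ, mul_assoc, Nat.mul_div_cancel_left _ (pow_pos (by omega) i)]
      simp [Nat.mul_mod_right]
    · intro h
      obtain ⟨t, rfl⟩ := ih.mpr (fun i hi => h i (by omega))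
      have hm := h m (by omega)
      unfold digit at hm
      rw [Nat.mul_div_cancel_left _ (pow_pos (by omega) m)] at hm
      rw [pow_succ]
      exact mul_dvd_mul_left (b^m) (Nat.dvd_of_mod_eq_zero hm)

private lemma aux_trunc_coeff (b m k i : ℕ) :
    (trunc b m k).coeff i = if i < m then ((digit b k i : ZMod b)) else 0 := by
  unfold trunc
  rw [Polynomial.finset_sum_coeff]
  simp only [Polynomial.coeff_C_mul, Polynomial.coeff_X_pow, mul_ite, mul_one, mul_zero]
  rw [Finset.sum_ite_eq (Finset.range m) i]
  simp [Finset.mem_range]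

private lemma aux_trunc_deg (b m k : ℕ) : (trunc b m k).degree < (m : WithBot ℕ) := by
  rw [Polynomial.degree_lt_iff_coeff_zero]
  intro j hj
  rw [aux_trunc_coeff, if_neg]
  exact fun hlt => absurd hj (by simp [Nat.cast_le]; omega)

private lemma aux_dvd_iff {b : ℕ} (hb : Nat.Prime b) (m k : ℕ) (p : Polynomial (ZMod b))
    (hdeg : p.degree = (m : WithBot ℕ)) : p ∣ trunc b m k ↔ b ^ m ∣ k := by
  haveI : Fact (Nat.Prime b) := ⟨hb⟩
  rw [aux_pow_dvd_iff hb.one_lt]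
  constructor
  · intro h i hi
    have h0 : trunc b m k = 0 :=
      Polynomial.eq_zero_of_dvd_of_degree_lt h (hdeg ▸ aux_trunc_deg b m k)
    have hc := congrArg (fun q => Polynomial.coeff q i) h0
    simp only [aux_trunc_coeff, if_pos hi, Polynomial.coeff_zero] at hc
    have hdvd : b ∣ digit b k i := (ZMod.natCast_eq_zero_iff _ _).mp hc
    exact Nat.eq_zero_of_dvd_of_lt hdvd (Nat.mod_lt _ (by have := hb.one_lt; omega))
  · intro h
    have h0 : trunc b m k = 0 := by
      ext i
      rw [aux_trunc_coeff, Polynomial.coeff_zero]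
      split_ifs with hi
      · rw [h i hi]; simp
      · rfl
    rw [h0]
    exact dvd_zero p

private lemma aux_log_pow_mul {b : ℕ} (hb : 1 < b) (m n : ℕ) (hn : n ≠ 0) :
    Nat.log b (b ^ m * n) = m + Nat.log b n := by
  induction m with
  | zero => simp
  | succ m ih =>
    have h1 : b ^ m * n ≠ 0 := by positivity
    have h2 : b ^ (m + 1) * n = (b ^ m * n) * b := by ring
    rw [h2, Nat.log_mul_base hb h1, ih]
    omega

private lemma aux_geom (b : ℕ) (hb : 1 < b) (c : ℕ) (hc : 2 ≤ c) :
    ∑' t : ℕ, ((b : ℝ) ^ (-(c : ℤ))) ^ Nat.log b (t + 1)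
      = ((b : ℝ) - 1) / (1 - (b : ℝ) ^ (1 - (c : ℤ))) := by
  have hb0 : (0 : ℝ) < b := by positivity
  have hb1 : (1 : ℝ) < b := by exact_mod_cast hb
  set y : ℝ := (b : ℝ) ^ (-(c : ℤ)) with hy
  have hy0 : 0 < y := zpow_pos hb0 _
  set r : ℝ := (b : ℝ) ^ (1 - (c : ℤ)) with hrdef
  have hr : (b : ℝ) * y = r := by
    rw [hy, hrdef, ← zpow_one_add₀ (ne_of_gt hb0)]
    congr 1
  have hr0 : 0 ≤ r := le_of_lt (zpow_pos hb0 _)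
  have hr1 : r < 1 := by
    have he : r = ((b : ℝ)⁻¹) ^ (c - 1) := by
      rw [hrdef, inv_pow, ← zpow_natCast (b : ℝ) (c - 1), ← zpow_neg]
      congr 1
      have : ((c : ℤ)) - 1 = ((c - 1 : ℕ) : ℤ) := by omega
      omega
    rw [he]
    exact pow_lt_one₀ (by positivity) (inv_lt_one_of_one_lt₀ hb1) (by omega)
  -- fibers
  set sfin : ℕ → Finset ℕ := fun μ => Finset.Ico (b ^ μ - 1) (b ^ (μ + 1) - 1) with hsfin
  have hmem : ∀ μ t, t ∈ sfin μ ↔ Nat.log b (t + 1) = μ := by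
    intro μ t
    rw [Nat.log_eq_iff (Or.inr ⟨hb, Nat.succ_ne_zero t⟩)]
    have h1 : 1 ≤ b ^ μ := Nat.one_le_pow _ _ (by omega)
    have h2 : 1 ≤ b ^ (μ + 1) := Nat.one_le_pow _ _ (by omega)
    simp only [hsfin, Finset.mem_Ico]
    omega
  have hcard : ∀ μ, (sfin μ).card = (b - 1) * b ^ μ := by
    intro μ
    have h1 : 1 ≤ b ^ μ := Nat.one_le_pow _ _ (by omega)
    have hsucc : b ^ (μ + 1) = b ^ μ * b := pow_succ b μ
    have hms : (b - 1) * b ^ μ = b * b ^ μ - 1 * b ^ μ := Nat.sub_mul b 1 (b ^ μ)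
    rw [hsfin]
    simp only [Nat.card_Ico]
    rw [hms, hsucc]
    have : b ^ μ * b = b * b ^ μ := mul_comm _ _
    omega
  -- the sigma equivalence
  have hbij : Function.Bijective (fun σ : Σ μ : ℕ, ↥(sfin μ) => (σ.2 : ℕ)) := by
    constructor
    · rintro ⟨μ, t, ht⟩ ⟨ν, s, hs⟩ h
      simp only at h
      have hμ : Nat.log b (t + 1) = μ := (hmem μ t).mp ht
      have hν : Nat.log b (s + 1) = ν := (hmem ν s).mp hs
      subst h
      have : μ = ν := by rw [← hμ, ← hν]
      subst this
      rfl
    · intro t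
      exact ⟨⟨Nat.log b (t + 1), ⟨t, (hmem _ t).mpr rfl⟩⟩, rfl⟩
  set e : (Σ μ : ℕ, ↥(sfin μ)) ≃ ℕ := Equiv.ofBijective _ hbij with he
  have hFy : ∀ σ : Σ μ : ℕ, ↥(sfin μ), y ^ Nat.log b ((e σ) + 1) = y ^ σ.1 := by
    rintro ⟨μ, t, ht⟩
    have : Nat.log b (t + 1) = μ := (hmem μ t).mp ht
    simp [he, Equiv.ofBijective_apply, this]
  rw [← Equiv.tsum_eq e (fun t => y ^ Nat.log b (t + 1))]
  rw [tsum_congr hFy]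
  -- inner sums
  have hinner : ∀ μ : ℕ, ∑' _ : ↥(sfin μ), y ^ μ = ((b : ℝ) - 1) * r ^ μ := by
    intro μ
    rw [Finset.tsum_subtype (sfin μ) (fun _ => y ^ μ), Finset.sum_const, hcard μ,
      nsmul_eq_mul]
    push_cast [Nat.cast_sub (le_of_lt hb)]
    rw [← hr, mul_pow]
    ring
  have hsummable : Summable (fun σ : Σ μ : ℕ, ↥(sfin μ) => y ^ σ.1) := by
    rw [summable_sigma_of_nonneg (fun σ => le_of_lt (pow_pos hy0 _))]
    constructor
    · intro μ; exact Summable.of_finite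
    · simp_rw [hinner]
      exact (summable_geometric_of_lt_one hr0 hr1).mul_left _
  rw [hsummable.tsum_sigma' (fun μ => Summable.of_finite)]
  simp_rw [hinner]
  rw [tsum_mul_left, tsum_geometric_of_lt_one hr0 hr1]
  rw [div_eq_mul_inv]


private lemma aux_rfun (b α d k : ℕ) (hk : k ≠ 0) :
    rfun b α d k = ((b : ℝ) ^ (-((2 * min α d + 1 : ℕ) : ℤ))) ^ Nat.log b k := by
  unfold rfun mu
  have h : -((((2 * min α d + 1) * Nat.log b k : ℕ)) : ℤ)
      = (-((2 * min α d + 1 : ℕ) : ℤ)) * (Nat.log b k : ℤ) := by push_cast; ring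
  rw [if_neg hk, h, zpow_mul, zpow_natCast]

instance : Unique (↥({1} : Finset ℕ)) :=
  ⟨⟨⟨1, by simp⟩⟩, fun x => Subtype.ext (Finset.mem_singleton.mp x.2)⟩

private def esing : ℕ ≃ (↥({1} : Finset ℕ) → ℕ) where
  toFun := fun k _ => k
  invFun := fun g => g ⟨1, by simp⟩
  left_inv := fun k => rfl
  right_inv := fun g => funext fun j => congrArg g (Subsingleton.elim _ _)


theorem statement11 (b : ℕ) (hb : Nat.Prime b) (m d α : ℕ)
    (hm : 1 ≤ m) (hd : 1 ≤ d) (hα : 1 ≤ α)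
    (p : Polynomial (ZMod b)) (hp : Irreducible p) (hdeg : p.degree = (m : WithBot ℕ))
    (γ : Finset ℕ → ℝ) (hγ : ∀ w, 0 ≤ γ w) :
    Bcrit b α d m γ p 1 (fun _ => 1) =
      (4 : ℝ) ^ (d - α) * γ {1} * ((b : ℝ) - 1) /
        ((b : ℝ) ^ ((2 * min α d + 1) * m) * (1 - (b : ℝ) ^ (-(2 * ((min α d : ℕ) : ℤ))))) := by
  have hb1 : 1 < b := hb.one_lt
  have hb0 : (0 : ℝ) < b := by positivity
  have hmin : 1 ≤ min α d := le_min hα hd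
  set c : ℕ := 2 * min α d + 1 with hc
  have hc2 : 2 ≤ c := by omega
  set y : ℝ := (b : ℝ) ^ (-(c : ℤ)) with hy
  have hy0 : 0 < y := zpow_pos hb0 _
  have hbm : 0 < b ^ m := pow_pos (by omega) m
  -- Step 1: reduce the sum over u to the single term u = {1}
  unfold Bcrit
  have hfilter : ((Finset.Icc 1 1).powerset.filter fun u => u ≠ ∅) = {({1} : Finset ℕ)} := by
    decide
  rw [hfilter, Finset.sum_singleton]
  have hblk : blk d ({1} : Finset ℕ) = {1} := by simp [blk]
  rw [hblk]
  simp only [Finset.card_singleton, one_mul]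
  -- Step 2: identify the tsum over (↥{1} → ℕ) with a tsum over ℕ
  have hS : (∑' k : ↥({1} : Finset ℕ) → ℕ,
        (if (∀ j, 1 ≤ k j) ∧ p ∣ ∑ j, trunc b m (k j) * (1 : Polynomial (ZMod b))
         then ∏ j, rfun b α d (k j) else 0))
      = ∑' k : ℕ, (if 1 ≤ k ∧ b ^ m ∣ k then rfun b α d k else 0) := by
    rw [← esing.tsum_eq]
    refine tsum_congr fun k => ?_
    simp only [esing, Equiv.coe_fn_mk, Finset.sum_const, Finset.prod_const, Finset.card_univ,
      Fintype.card_coe, Finset.card_singleton, one_smul, pow_one, mul_one, forall_const,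
      aux_dvd_iff hb m k p hdeg]
  rw [hS]
  -- Step 3: reindex via k = b^m * (t+1)
  have hstep : (∑' k : ℕ, if 1 ≤ k ∧ b ^ m ∣ k then rfun b α d k else 0)
      = ∑' t : ℕ, y ^ m * y ^ Nat.log b (t + 1) := by
    apply tsum_eq_tsum_of_ne_zero_bij (fun t => b ^ m * ((t : ℕ) + 1))
    · intro x z h
      simp only at h
      have h2 := Nat.eq_of_mul_eq_mul_left hbm h
      exact Subtype.ext (by omega)
    · intro k hk
      rw [Function.mem_support] at hk
      by_cases hcond : 1 ≤ k ∧ b ^ m ∣ k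
      · obtain ⟨t, rfl⟩ := hcond.2
        have ht : t ≠ 0 := by
          rintro rfl
          exact absurd hcond.1 (by simp)
        refine ⟨⟨t - 1, ?_⟩, ?_⟩
        · rw [Function.mem_support]
          exact ne_of_gt (by positivity)
        · show b ^ m * (t - 1 + 1) = b ^ m * t
          congr 1
          omega
      · rw [if_neg hcond] at hk
        exact absurd rfl hk
    · intro x
      have hk1 : 1 ≤ b ^ m * ((x : ℕ) + 1) := Nat.mul_pos hbm (Nat.succ_pos _)
      rw [if_pos ⟨hk1, dvd_mul_right _ _⟩,
        aux_rfun b α d _ (Nat.mul_pos hbm (Nat.succ_pos _)).ne',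
        aux_log_pow_mul hb1 m ((x : ℕ) + 1) (Nat.succ_ne_zero _), pow_add]
  rw [hstep, tsum_mul_left, aux_geom b hb1 c hc2]
  -- Step 4: final algebra
  have hym : y ^ m = ((b : ℝ) ^ (c * m))⁻¹ := by
    have hexp2 : (-(c : ℤ)) * (m : ℤ) = -(((c * m : ℕ)) : ℤ) := by push_cast; ring
    rw [hy, ← zpow_natCast ((b : ℝ) ^ (-(c : ℤ))) m, ← zpow_mul, hexp2,
      ← zpow_natCast (b : ℝ) (c * m), ← zpow_neg]
  have hexp : (1 : ℤ) - (c : ℤ) = -(2 * ((min α d : ℕ) : ℤ)) := by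
    rw [hc]; push_cast; ring
  have hD : (1 : ℝ) - (b : ℝ) ^ (-(2 * ((min α d : ℕ) : ℤ))) ≠ 0 := by
    have heq : (b : ℝ) ^ (-(2 * ((min α d : ℕ) : ℤ))) = ((b : ℝ)⁻¹) ^ (2 * min α d) := by
      have h2 : -(2 * ((min α d : ℕ) : ℤ)) = -(((2 * min α d : ℕ)) : ℤ) := by push_cast; ring
      rw [h2, inv_pow, ← zpow_natCast (b : ℝ) (2 * min α d), ← zpow_neg]
    have h1 : (b : ℝ) ^ (-(2 * ((min α d : ℕ) : ℤ))) < 1 := by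
      rw [heq]
      exact pow_lt_one₀ (by positivity) (inv_lt_one_of_one_lt₀ (by exact_mod_cast hb1))
        (by omega)
    linarith
  have hP : ((b : ℝ) ^ (c * m)) ≠ 0 := by positivity
  rw [hym, hexp]
  field_simp
end ISPLR
end
end
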